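/- Let S be a set of primes with |{p ∈ S : p ≤ x}| = o(x/(log x)^{9/8}). Then S is weakly regular of Dirichlet density 0; that is, the function z ↦ ∑_{p ∈ S} p^{-z}, a priori holomorphic on Re(z) > 1, extends continuously to the closed half-plane Re(z) ≥ 1. -/

import Mathlib

open Filter Finset Complex
open scoped Classical

-- summability of reciprocals
theorem aux_summable (S : Set ℕ) (hS : ∀ p ∈ S, Nat.Prime p)
    (hcount : Tendsto (fun x : ℕ =>
        (((Finset.Icc 1 x).filter (fun p => p ∈ S)).card : ℝ) *
          (Real.log x) ^ ((9 : ℝ)/8) / (x : ℝ)) atTop (nhds 0)) :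
    Summable (fun p : S => ((p : ℕ) : ℝ)⁻¹) := by
  set a : ℕ → ℝ := fun n => if n ∈ S then (n : ℝ)⁻¹ else 0 with ha
  have ha_nonneg : ∀ n, 0 ≤ a n := by
    intro n; simp only [ha]; split <;> positivity
  -- eventual count bound
  obtain ⟨N₀, hN₀⟩ := eventually_atTop.mp
    (hcount.eventually (eventually_lt_nhds (by norm_num : (0:ℝ) < 1)))
  set b : ℕ → ℝ := fun k => ∑ n ∈ Finset.Ico (2^k) (2^(k+1)), a n with hb
  have hb_nonneg : ∀ k, 0 ≤ b k := fun k => Finset.sum_nonneg fun n _ => ha_nonneg n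
  -- block bound
  have hblock : ∀ᶠ k in atTop, ‖b k‖ ≤ (2 * (Real.log 2) ^ (-(9:ℝ)/8)) * ‖((k:ℝ)+1) ^ (-(9:ℝ)/8)‖ := by
    rw [eventually_atTop]
    refine ⟨N₀ + 1, fun k hk => ?_⟩
    set m : ℕ := 2^(k+1) with hm
    have hk2 : k + 1 < m := Nat.lt_two_pow_self (n := k+1)
    have hmN : N₀ ≤ m := by omega
    have hcnt := hN₀ m hmN
    set cnt : ℕ := ((Finset.Icc 1 m).filter (fun p => p ∈ S)).card with hcntdef
    have hm0 : (0:ℝ) < (m:ℝ) := by exact_mod_cast Nat.pos_of_ne_zero (by omega)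
    have hL : Real.log (m:ℝ) = ((k:ℝ)+1) * Real.log 2 := by
      rw [hm]; push_cast; rw [Real.log_pow]; push_cast; ring
    have hx0 : (0:ℝ) < (k:ℝ)+1 := by positivity
    have hl20 : (0:ℝ) < Real.log 2 := Real.log_pos (by norm_num)
    have hL0 : (0:ℝ) < Real.log (m:ℝ) := by rw [hL]; positivity
    have hLp : (0:ℝ) < (Real.log (m:ℝ))^((9:ℝ)/8) := Real.rpow_pos_of_pos hL0 _
    have hcnt' : (cnt:ℝ) ≤ (m:ℝ) / (Real.log (m:ℝ))^((9:ℝ)/8) :=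
      le_of_lt ((lt_div_iff₀ hLp).mpr ((div_lt_one hm0).mp hcnt))
    have h2k0 : (0:ℝ) < ((2^k : ℕ):ℝ) := by positivity
    -- bound b k by cnt / 2^k
    have h1 : b k ≤ (cnt:ℝ) * ((2^k : ℕ):ℝ)⁻¹ := by
      have hstep : b k ≤ ∑ n ∈ Finset.Ico (2^k) (2^(k+1)),
          (if n ∈ S then ((2^k : ℕ):ℝ)⁻¹ else 0) := by
        apply Finset.sum_le_sum
        intro n hn
        simp only [ha]
        split
        · apply inv_anti₀ h2k0
          exact_mod_cast (Finset.mem_Ico.mp hn).1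
        · exact le_refl 0
      have heq : ∑ n ∈ Finset.Ico (2^k) (2^(k+1)),
          (if n ∈ S then ((2^k : ℕ):ℝ)⁻¹ else 0)
          = (((Finset.Ico (2^k) (2^(k+1))).filter (fun n => n ∈ S)).card : ℝ)
            * ((2^k : ℕ):ℝ)⁻¹ := by
        rw [← Finset.sum_filter, Finset.sum_const, nsmul_eq_mul]
      have hcard : ((Finset.Ico (2^k) (2^(k+1))).filter (fun n => n ∈ S)).card ≤ cnt := by
        apply Finset.card_le_card
        apply Finset.filter_subset_filter
        intro n hn
        rw [Finset.mem_Ico] at hn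
        rw [Finset.mem_Icc]
        have h1n : 1 ≤ 2^k := Nat.one_le_two_pow
        omega
      calc b k ≤ _ := hstep
        _ = _ := heq
        _ ≤ (cnt:ℝ) * ((2^k : ℕ):ℝ)⁻¹ := by
            apply mul_le_mul_of_nonneg_right _ (by positivity)
            exact_mod_cast hcard
    -- final algebra
    have h2 : (cnt:ℝ) * ((2^k : ℕ):ℝ)⁻¹
        ≤ (2 * (Real.log 2) ^ (-(9:ℝ)/8)) * (((k:ℝ)+1) ^ (-(9:ℝ)/8)) := by
      have hXeq : (Real.log (m:ℝ))^((9:ℝ)/8)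
          = (((k:ℝ)+1))^((9:ℝ)/8) * (Real.log 2)^((9:ℝ)/8) := by
        rw [hL, Real.mul_rpow hx0.le hl20.le]
      have hmval : (m:ℝ) = 2 * ((2^k : ℕ):ℝ) := by rw [hm]; push_cast; ring
      calc (cnt:ℝ) * ((2^k : ℕ):ℝ)⁻¹
          ≤ ((m:ℝ) / (Real.log (m:ℝ))^((9:ℝ)/8)) * ((2^k : ℕ):ℝ)⁻¹ :=
            mul_le_mul_of_nonneg_right hcnt' (by positivity)
        _ = (2 * (Real.log 2) ^ (-(9:ℝ)/8)) * (((k:ℝ)+1) ^ (-(9:ℝ)/8)) := by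
            rw [hXeq, hmval, neg_div, Real.rpow_neg hl20.le, Real.rpow_neg hx0.le]
            field_simp
    have hn1 : ‖b k‖ = b k := Real.norm_of_nonneg (hb_nonneg k)
    have hn2 : ‖((k:ℝ)+1) ^ (-(9:ℝ)/8)‖ = ((k:ℝ)+1) ^ (-(9:ℝ)/8) :=
      Real.norm_of_nonneg (Real.rpow_nonneg hx0.le _)
    rw [hn1, hn2]
    exact h1.trans h2
  have hsb : Summable b := by
    have h1 : Summable (fun k : ℕ => ((k:ℝ)+1) ^ (-(9:ℝ)/8)) := by
      have := (Real.summable_nat_rpow (p := -(9:ℝ)/8)).mpr (by norm_num)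
      have h2 := (summable_nat_add_iff (f := fun n : ℕ => (n:ℝ) ^ (-(9:ℝ)/8)) 1).mpr this
      refine h2.congr fun n => ?_
      push_cast; ring_nf
    exact summable_of_isBigO_nat h1 (Asymptotics.IsBigO.of_bound _ hblock)
  -- partial sums
  have hps : ∀ K : ℕ, ∑ n ∈ Finset.range (2^K) , a n = ∑ k ∈ Finset.range K, b k := by
    intro K
    induction K with
    | zero => simp [ha]
    | succ K ih =>
      rw [Finset.sum_range_succ, ← ih, Finset.range_eq_Ico,
        ← Finset.sum_Ico_consecutive a (Nat.zero_le (2^K))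
          (Nat.pow_le_pow_right (by norm_num) (Nat.le_succ K))]
      rw [Finset.range_eq_Ico]
  have hbound : ∀ N : ℕ, ∑ n ∈ Finset.range N, a n ≤ ∑' k, b k := by
    intro N
    calc ∑ n ∈ Finset.range N, a n ≤ ∑ n ∈ Finset.range (2^N), a n := by
          apply Finset.sum_le_sum_of_subset_of_nonneg
          · exact Finset.range_subset_range.mpr (Nat.lt_two_pow_self (n := N)).le
          · intro n _ _; exact ha_nonneg n
      _ = ∑ k ∈ Finset.range N, b k := hps N
      _ ≤ ∑' k, b k := Summable.sum_le_tsum _ (fun k _ => hb_nonneg k) hsb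
  have hsa : Summable a := summable_of_sum_range_le ha_nonneg hbound
  have hind : Summable (S.indicator fun n : ℕ => (n:ℝ)⁻¹) := by
    refine hsa.congr fun n => ?_
    by_cases h : n ∈ S <;> simp [ha, Set.indicator, h]
  exact summable_subtype_iff_indicator.mpr hind

theorem sparse_primes_weakly_regular_density_zero
    (S : Set ℕ) (hS : ∀ p ∈ S, Nat.Prime p)
    (hcount : Tendsto (fun x : ℕ =>
        (((Finset.Icc 1 x).filter (fun p => p ∈ S)).card : ℝ) *
          (Real.log x) ^ ((9 : ℝ)/8) / (x : ℝ)) atTop (nhds 0)) :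
    ∃ g : ℂ → ℂ,
      DifferentiableOn ℂ g {z : ℂ | 1 < z.re} ∧
      ContinuousOn g {z : ℂ | 1 ≤ z.re} ∧
      ∀ z : ℂ, 1 < z.re →
        ∑' p : S, (((p : ℕ) : ℂ)) ^ (-z) = g z := by
  have hu : Summable (fun p : S => ((p : ℕ) : ℝ)⁻¹) := aux_summable S hS hcount
  set F : S → ℂ → ℂ := fun p z => (((p : ℕ) : ℂ)) ^ (-z) with hF
  have hprime : ∀ p : S, Nat.Prime (p : ℕ) := fun p => hS p p.2
  have hne : ∀ p : S, (((p : ℕ) : ℂ)) ≠ 0 := fun p =>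
    Nat.cast_ne_zero.mpr (hprime p).pos.ne'
  have hbd : ∀ (p : S) (z : ℂ), z ∈ {z : ℂ | 1 ≤ z.re} → ‖F p z‖ ≤ ((p : ℕ) : ℝ)⁻¹ := by
    intro p z hz
    rw [hF]
    rw [Complex.norm_natCast_cpow_of_pos (hprime p).pos]
    have h1 : ((p:ℕ):ℝ) ^ ((-z).re) ≤ ((p:ℕ):ℝ) ^ (-1 : ℝ) := by
      apply Real.rpow_le_rpow_of_exponent_le
      · exact_mod_cast (hprime p).one_lt.le
      · have hz' : 1 ≤ z.re := hz
        rw [Complex.neg_re]; linarith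
    rw [Real.rpow_neg_one] at h1
    exact h1
  refine ⟨fun z => ∑' p : S, F p z, ?_, ?_, fun z hz => rfl⟩
  · apply differentiableOn_tsum_of_summable_norm hu
    · intro p
      exact ((differentiable_neg).const_cpow (Or.inl (hne p))).differentiableOn
    · exact isOpen_lt continuous_const Complex.continuous_re
    · intro p w hw
      exact hbd p w (show (1:ℝ) ≤ w.re from le_of_lt hw)
  · have htu := tendstoUniformlyOn_tsum hu hbd
    apply htu.continuousOn
    apply Filter.Eventually.frequently
    filter_upwards with t
    apply Continuous.continuousOn
    exact continuous_finset_sum t fun p _ => continuous_neg.const_cpow (Or.inl (hne p))
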